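/- Let α, β, γ, λ, μ be real numbers and let N(α,β,γ,λ,μ) be the 3×3 real matrix whose rows are (α,β,γ), (λα,λβ,λγ), (μα,μβ,μγ). Suppose α ≠ 0 and α² + λβ² + μγ² = 0. If one of the following holds: (1) γ = 0, λβμ ≠ 0 and μ < 0; (2) β = 0, λγμ ≠ 0 and λ < 0; then the evolution algebra E_{N(α,β,γ,λ,μ)} is isomorphic to the evolution algebra E₃ whose structure matrix has rows (1,1,0), (−1,−1,0), (−1,−1,0). -/

import Mathlib

/-- Evolution algebra multiplication on ℝ³ determined by a structure matrix `A`: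
`(x ∗_A y) j = ∑ i, x i * y i * A i j`. -/
def evolMul (A : Matrix (Fin 3) (Fin 3) ℝ) (x y : Fin 3 → ℝ) : Fin 3 → ℝ :=
  fun j => ∑ i, x i * y i * A i j

/-- The evolution algebras with structure matrices `A` and `B` are isomorphic:
there is an ℝ-linear equivalence of ℝ³ intertwining the two multiplications. -/
def EvolIso (A B : Matrix (Fin 3) (Fin 3) ℝ) : Prop :=
  ∃ f : (Fin 3 → ℝ) ≃ₗ[ℝ] (Fin 3 → ℝ),
    ∀ x y, f (evolMul A x y) = evolMul B (f x) (f y)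

lemma evolIso_of_matrix (A B M N : Matrix (Fin 3) (Fin 3) ℝ)
    (hNM : N * M = 1) (hMN : M * N = 1)
    (h : ∀ x y, M.mulVec (evolMul A x y) = evolMul B (M.mulVec x) (M.mulVec y)) :
    EvolIso A B := by
  refine ⟨LinearEquiv.mk (LinearMap.mk (AddHom.mk M.mulVec (Matrix.mulVec_add M))
    (Matrix.mulVec_smul M)) N.mulVec (fun x => ?_) (fun x => ?_), h⟩
  · show N.mulVec (M.mulVec x) = x
    rw [Matrix.mulVec_mulVec, hNM, Matrix.one_mulVec]
  · show M.mulVec (N.mulVec x) = x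
    rw [Matrix.mulVec_mulVec, hMN, Matrix.one_mulVec]

/-- All entries of a 3×3 `!![..]` matrix, as `rfl` facts. -/
lemma entries3 (a00 a01 a02 a10 a11 a12 a20 a21 a22 : ℝ) :
    (!![a00,a01,a02;a10,a11,a12;a20,a21,a22]) 0 0 = a00 ∧
    (!![a00,a01,a02;a10,a11,a12;a20,a21,a22]) 0 1 = a01 ∧
    (!![a00,a01,a02;a10,a11,a12;a20,a21,a22]) 0 2 = a02 ∧
    (!![a00,a01,a02;a10,a11,a12;a20,a21,a22]) 1 0 = a10 ∧
    (!![a00,a01,a02;a10,a11,a12;a20,a21,a22]) 1 1 = a11 ∧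
    (!![a00,a01,a02;a10,a11,a12;a20,a21,a22]) 1 2 = a12 ∧
    (!![a00,a01,a02;a10,a11,a12;a20,a21,a22]) 2 0 = a20 ∧
    (!![a00,a01,a02;a10,a11,a12;a20,a21,a22]) 2 1 = a21 ∧
    (!![a00,a01,a02;a10,a11,a12;a20,a21,a22]) 2 2 = a22 :=
  ⟨rfl, rfl, rfl, rfl, rfl, rfl, rfl, rfl, rfl⟩

set_option maxHeartbeats 1000000 in
lemma evolIso_case1 (a b l m s : ℝ) (ha : a ≠ 0) (hb : b ≠ 0)
    (hq : a ^ 2 + l * b ^ 2 = 0) (hs : s * s = -m) (hs0 : s ≠ 0) :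
    EvolIso (!![a, b, 0; l * a, l * b, 0; m * a, m * b, 0])
      (!![1, 1, 0; -1, -1, 0; -1, -1, 0]) := by
  obtain ⟨e1,e2,e3,e4,e5,e6,e7,e8,e9⟩ := entries3 1 1 0 (-1) (-1) 0 (-1) (-1) 0
  obtain ⟨p1,p2,p3,p4,p5,p6,p7,p8,p9⟩ := entries3 a b 0 (l*a) (l*b) 0 (m*a) (m*b) 0
  obtain ⟨q1,q2,q3,q4,q5,q6,q7,q8,q9⟩ :=
    entries3 ((1+a^2)/(2*a)) ((1-a^2)/(2*b)) 0 ((1-a^2)/(2*a)) ((1+a^2)/(2*b)) 0 0 0 s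
  obtain ⟨r1,r2,r3,r4,r5,r6,r7,r8,r9⟩ :=
    entries3 ((1+a^2)/(2*a)) (-((1-a^2)/(2*a))) 0
      (-(b*(1-a^2)/(2*a^2))) (b*(1+a^2)/(2*a^2)) 0 0 0 (1/s)
  have hfin2 : (⟨2, by norm_num⟩ : Fin 3) = 2 := rfl
  have hl : l = -(a^2/b^2) := by field_simp; linarith
  have hm : m = -(s*s) := by linarith
  subst hl hm
  apply evolIso_of_matrix _ _
    (!![(1+a^2)/(2*a), (1-a^2)/(2*b), 0; (1-a^2)/(2*a), (1+a^2)/(2*b), 0; 0, 0, s])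
    (!![(1+a^2)/(2*a), -((1-a^2)/(2*a)), 0;
        -(b*(1-a^2)/(2*a^2)), b*(1+a^2)/(2*a^2), 0; 0, 0, 1/s])
  · ext i j
    fin_cases i <;> fin_cases j <;>
      simp only [Matrix.mul_apply, Fin.sum_univ_three,
        q1,q2,q3,q4,q5,q6,q7,q8,q9, r1,r2,r3,r4,r5,r6,r7,r8,r9,
        hfin2, Fin.isValue, Fin.mk_zero, Fin.mk_one, Matrix.one_apply] <;>
      (try norm_num) <;> (try field_simp) <;> (try ring) <;> (try (rw [if_neg (by decide)])) <;> decide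
  · ext i j
    fin_cases i <;> fin_cases j <;>
      simp only [Matrix.mul_apply, Fin.sum_univ_three,
        q1,q2,q3,q4,q5,q6,q7,q8,q9, r1,r2,r3,r4,r5,r6,r7,r8,r9,
        hfin2, Fin.isValue, Fin.mk_zero, Fin.mk_one, Matrix.one_apply] <;>
      (try norm_num) <;> (try field_simp) <;> (try ring) <;> (try (rw [if_neg (by decide)])) <;> decide
  · intro x y
    funext j
    fin_cases j <;>
      simp only [evolMul, Matrix.mulVec, dotProduct, Fin.sum_univ_three,
        e1,e2,e3,e4,e5,e6,e7,e8,e9, p1,p2,p3,p4,p5,p6,p7,p8,p9,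
        q1,q2,q3,q4,q5,q6,q7,q8,q9,
        hfin2, Fin.isValue, Fin.mk_zero, Fin.mk_one] <;>
      field_simp <;> ring

set_option maxHeartbeats 1000000 in
lemma evolIso_case2 (a c l m t : ℝ) (ha : a ≠ 0) (hc : c ≠ 0)
    (hq : a ^ 2 + m * c ^ 2 = 0) (ht : t * t = -l) (ht0 : t ≠ 0) :
    EvolIso (!![a, 0, c; l * a, 0, l * c; m * a, 0, m * c])
      (!![1, 1, 0; -1, -1, 0; -1, -1, 0]) := by
  obtain ⟨e1,e2,e3,e4,e5,e6,e7,e8,e9⟩ := entries3 1 1 0 (-1) (-1) 0 (-1) (-1) 0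
  obtain ⟨p1,p2,p3,p4,p5,p6,p7,p8,p9⟩ := entries3 a 0 c (l*a) 0 (l*c) (m*a) 0 (m*c)
  obtain ⟨q1,q2,q3,q4,q5,q6,q7,q8,q9⟩ :=
    entries3 ((1+a^2)/(2*a)) 0 ((1-a^2)/(2*c)) ((1-a^2)/(2*a)) 0 ((1+a^2)/(2*c)) 0 t 0
  obtain ⟨r1,r2,r3,r4,r5,r6,r7,r8,r9⟩ :=
    entries3 ((1+a^2)/(2*a)) (-((1-a^2)/(2*a))) 0 0 0 (1/t)
      (-(c*(1-a^2)/(2*a^2))) (c*(1+a^2)/(2*a^2)) 0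
  have hfin2 : (⟨2, by norm_num⟩ : Fin 3) = 2 := rfl
  have hm : m = -(a^2/c^2) := by field_simp; linarith
  have hl : l = -(t*t) := by linarith
  subst hm hl
  apply evolIso_of_matrix _ _
    (!![(1+a^2)/(2*a), 0, (1-a^2)/(2*c); (1-a^2)/(2*a), 0, (1+a^2)/(2*c); 0, t, 0])
    (!![(1+a^2)/(2*a), -((1-a^2)/(2*a)), 0; 0, 0, 1/t;
        -(c*(1-a^2)/(2*a^2)), c*(1+a^2)/(2*a^2), 0])
  · ext i j
    fin_cases i <;> fin_cases j <;>
      simp only [Matrix.mul_apply, Fin.sum_univ_three,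
        q1,q2,q3,q4,q5,q6,q7,q8,q9, r1,r2,r3,r4,r5,r6,r7,r8,r9,
        hfin2, Fin.isValue, Fin.mk_zero, Fin.mk_one, Matrix.one_apply] <;>
      (try norm_num) <;> (try field_simp) <;> (try ring) <;> (try (rw [if_neg (by decide)])) <;> simp
  · ext i j
    fin_cases i <;> fin_cases j <;>
      simp only [Matrix.mul_apply, Fin.sum_univ_three,
        q1,q2,q3,q4,q5,q6,q7,q8,q9, r1,r2,r3,r4,r5,r6,r7,r8,r9,
        hfin2, Fin.isValue, Fin.mk_zero, Fin.mk_one, Matrix.one_apply] <;>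
      (try norm_num) <;> (try field_simp) <;> (try ring) <;> (try (rw [if_neg (by decide)])) <;> simp
  · intro x y
    funext j
    fin_cases j <;>
      simp only [evolMul, Matrix.mulVec, dotProduct, Fin.sum_univ_three,
        e1,e2,e3,e4,e5,e6,e7,e8,e9, p1,p2,p3,p4,p5,p6,p7,p8,p9,
        q1,q2,q3,q4,q5,q6,q7,q8,q9,
        hfin2, Fin.isValue, Fin.mk_zero, Fin.mk_one] <;>
      field_simp <;> ring

theorem stmt (a b c l m : ℝ)
    (ha : a ≠ 0) (hq : a ^ 2 + l * b ^ 2 + m * c ^ 2 = 0)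
    (hcond : (c = 0 ∧ l * b * m ≠ 0 ∧ m < 0) ∨ (b = 0 ∧ l * c * m ≠ 0 ∧ l < 0)) :
    EvolIso (!![a, b, c; l * a, l * b, l * c; m * a, m * b, m * c] : Matrix (Fin 3) (Fin 3) ℝ) (!![1, 1, 0; -1, -1, 0; -1, -1, 0] : Matrix (Fin 3) (Fin 3) ℝ) := by
  rcases hcond with ⟨hc, hlbm, hm⟩ | ⟨hb, hlcm, hl⟩
  · subst hc
    have hb : b ≠ 0 := fun h => hlbm (by rw [h]; ring)
    have hq' : a ^ 2 + l * b ^ 2 = 0 := by nlinarith [hq]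
    have hs : Real.sqrt (-m) * Real.sqrt (-m) = -m := Real.mul_self_sqrt (by linarith)
    have hs0 : Real.sqrt (-m) ≠ 0 := by
      intro h0; rw [h0, mul_zero] at hs; linarith
    have := evolIso_case1 a b l m (Real.sqrt (-m)) ha hb hq' hs hs0
    simpa [mul_zero] using this
  · subst hb
    have hc : c ≠ 0 := fun h => hlcm (by rw [h]; ring)
    have hq' : a ^ 2 + m * c ^ 2 = 0 := by nlinarith [hq]
    have ht : Real.sqrt (-l) * Real.sqrt (-l) = -l := Real.mul_self_sqrt (by linarith)
    have ht0 : Real.sqrt (-l) ≠ 0 := by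
      intro h0; rw [h0, mul_zero] at ht; linarith
    have := evolIso_case2 a c l m (Real.sqrt (-l)) ha hc hq' ht ht0
    simpa [mul_zero] using this
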